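/- The convex hull of a predictable pre-image is an F_s-cone: (1) if Z ∈ conv M_s(D) and g is a bounded nonnegative F_s-measurable random variable, then gZ ∈ conv M_s(D); (2) if Z¹, Z² ∈ conv M_s(D), then Z¹ + Z² ∈ conv M_s(D). -/

import Mathlib

/-!
Statement 15: the convex hull of the predictable pre-image `M_s(D)` is an `F_s`-cone:
it is stable under multiplication by bounded nonnegative `F_s`-measurable random
variables, and under addition.
-/

open MeasureTheory Filter Set

variable {Ω : Type*} {mΩ : MeasurableSpace Ω}

/-- The predictable pre-image `M_s(D)` of `D` at time `s`. -/
def predPre (μ : Measure Ω) (ℱ : Filtration ℕ mΩ) {d : ℕ} (s : ℕ)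
    (D : Set (Fin (d+1) → Ω → ℝ)) : Set (Fin (d+1) → Ω → ℝ) :=
  {Z | (∀ i, Integrable (Z i) μ) ∧ ∃ α : Ω → ℝ, ∃ Z' ∈ D,
    Measurable[ℱ s] α ∧ 0 ≤ᵐ[μ] α ∧
    (∀ i, Integrable (fun ω => α ω * Z' i ω) μ) ∧
    (∀ i, μ[Z i | ℱ (s+1)] =ᵐ[μ] fun ω => α ω * (μ[Z' i | ℱ (s+1)]) ω)}

set_option linter.unusedVariables false

/-- Pointwise multiplication by a fixed function, as a linear map. -/
def mulLinMap (d : ℕ) (g : Ω → ℝ) :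
    (Fin (d+1) → Ω → ℝ) →ₗ[ℝ] (Fin (d+1) → Ω → ℝ) where
  toFun Z := fun i ω => g ω * Z i ω
  map_add' Z W := by funext i ω; simp [mul_add]
  map_smul' c Z := by funext i ω; simp [Pi.smul_apply, smul_eq_mul]; ring

lemma predPre_mul_mem (μ : Measure Ω) [IsProbabilityMeasure μ] (ℱ : Filtration ℕ mΩ)
    {d : ℕ} (s : ℕ) (D : Set (Fin (d+1) → Ω → ℝ))
    {Z : Fin (d+1) → Ω → ℝ} (hZ : Z ∈ predPre μ ℱ s D) {g : Ω → ℝ}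
    (hg_meas : Measurable[ℱ s] g) (hg_nn : 0 ≤ᵐ[μ] g) (hg_bdd : MemLp g ⊤ μ) :
    (fun i ω => g ω * Z i ω) ∈ predPre μ ℱ s D := by
  obtain ⟨hZint, α, Z', hZ'D, hα_meas, hα_nn, hαZ'int, hcond⟩ := hZ
  have hg_sm : StronglyMeasurable[ℱ (s+1)] g :=
    (hg_meas.stronglyMeasurable).mono (ℱ.mono (Nat.le_succ s))
  have hg_aesm : AEStronglyMeasurable g μ :=
    ((hg_meas.mono (ℱ.le s) le_rfl).stronglyMeasurable).aestronglyMeasurable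
  set c : ℝ := (eLpNormEssSup g μ).toReal with hc
  have hg_bound : ∀ᵐ ω ∂μ, ‖g ω‖ ≤ c := by
    filter_upwards [ae_le_eLpNormEssSup (f := g) (μ := μ)] with ω hω
    have hlt : eLpNormEssSup g μ ≠ ⊤ := by
      simpa [eLpNorm_exponent_top] using hg_bdd.2.ne
    have h2 := ENNReal.toReal_mono hlt hω
    simpa using h2
  refine ⟨fun i => (hZint i).bdd_mul hg_aesm hg_bound,
    fun ω => g ω * α ω, Z', hZ'D, hg_meas.mul hα_meas, ?_, ?_, ?_⟩
  · filter_upwards [hg_nn, hα_nn] with ω h1 h2; exact mul_nonneg h1 h2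
  · intro i
    have := (hαZ'int i).bdd_mul hg_aesm hg_bound
    simpa [mul_assoc] using this
  · intro i
    have h1 : μ[fun ω => g ω * Z i ω | ℱ (s+1)] =ᵐ[μ] g * μ[Z i | ℱ (s+1)] := by
      have := condExp_mul_of_stronglyMeasurable_left (μ := μ) hg_sm
        (by exact (hZint i).bdd_mul hg_aesm hg_bound) (hZint i)
      exact this
    filter_upwards [h1, hcond i] with ω h1ω h2ω
    simp only [Pi.mul_apply] at h1ω
    rw [h1ω, h2ω]; ring

/-- (1) If `Z ∈ conv M_s(D)` and `g` is a bounded nonnegative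
`F_s`-measurable random variable, then `gZ ∈ conv M_s(D)`.
(2) If `Z¹, Z² ∈ conv M_s(D)`, then `Z¹ + Z² ∈ conv M_s(D)`. -/
theorem convexHull_predPre_smul_add
    (μ : Measure Ω) [IsProbabilityMeasure μ] (ℱ : Filtration ℕ mΩ) (d s : ℕ)
    (D : Set (Fin (d+1) → Ω → ℝ))
    (hD : ∀ Z ∈ D, ∀ i, Integrable (Z i) μ ∧ 0 ≤ᵐ[μ] Z i) :
    (∀ Z ∈ convexHull ℝ (predPre μ ℱ s D), ∀ g : Ω → ℝ,
      Measurable[ℱ s] g → 0 ≤ᵐ[μ] g → MemLp g ⊤ μ →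
      (fun i ω => g ω * Z i ω) ∈ convexHull ℝ (predPre μ ℱ s D)) ∧
    (∀ Z₁ ∈ convexHull ℝ (predPre μ ℱ s D), ∀ Z₂ ∈ convexHull ℝ (predPre μ ℱ s D),
      Z₁ + Z₂ ∈ convexHull ℝ (predPre μ ℱ s D)) := by
  have part1 : ∀ Z ∈ convexHull ℝ (predPre μ ℱ s D), ∀ g : Ω → ℝ,
      Measurable[ℱ s] g → 0 ≤ᵐ[μ] g → MemLp g ⊤ μ →
      (fun i ω => g ω * Z i ω) ∈ convexHull ℝ (predPre μ ℱ s D) := by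
    intro Z hZ g hg_meas hg_nn hg_bdd
    have hsub : predPre μ ℱ s D ⊆
        (mulLinMap d g) ⁻¹' (convexHull ℝ (predPre μ ℱ s D)) := fun W hW =>
      subset_convexHull ℝ _ (predPre_mul_mem μ ℱ s D hW hg_meas hg_nn hg_bdd)
    have hconv : Convex ℝ ((mulLinMap d g) ⁻¹' (convexHull ℝ (predPre μ ℱ s D))) :=
      (convex_convexHull ℝ _).linear_preimage _
    exact convexHull_min hsub hconv hZ
  refine ⟨part1, ?_⟩
  intro Z₁ h1 Z₂ h2
  have hmid : (1/2:ℝ) • Z₁ + (1/2:ℝ) • Z₂ ∈ convexHull ℝ (predPre μ ℱ s D) :=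
    (convex_convexHull ℝ _) h1 h2 (by norm_num) (by norm_num) (by norm_num)
  have h2' := part1 _ hmid (fun _ => 2) measurable_const
    (Eventually.of_forall fun _ => by norm_num) (memLp_top_const 2)
  have heq : Z₁ + Z₂ =
      (fun i ω => 2 * ((1/2:ℝ) • Z₁ + (1/2:ℝ) • Z₂) i ω) := by
    funext i ω
    simp [Pi.add_apply, Pi.smul_apply, smul_eq_mul]
    ring
  rw [heq]
  exact h2'
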